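/- Let w be a complex number with Re(w) > −1 and let z be any complex number. Then the series Σ_{k=0}^{∞} binom(w, k) · sinc(z − k) converges absolutely, i.e., the sequence k ↦ binom(w, k) · sinc(z − k) is summable in norm. -/

import Mathlib

open scoped Real

/-- The generalized binomial coefficient `binom w z = Γ(w+1) / (Γ(z+1) Γ(w-z+1))`. -/
noncomputable def cbinom (w z : ℂ) : ℂ :=
  Complex.Gamma (w + 1) / (Complex.Gamma (z + 1) * Complex.Gamma (w - z + 1))

/-- The (normalized) sinc function on ℂ. -/
noncomputable def csinc (z : ℂ) : ℂ :=
  if z = 0 then 1 else Complex.sin (π * z) / (π * z)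

private lemma norm_sin_sub_nat_mul_pi (a : ℂ) (k : ℕ) :
    ‖Complex.sin (a - k * (π : ℂ))‖ = ‖Complex.sin a‖ := by
  induction k with
  | zero => simp
  | succ n ih =>
      have h : a - ((n + 1 : ℕ) : ℂ) * (π : ℂ) = (a - n * π) - π := by push_cast; ring
      rw [h, Complex.sin_sub_pi, norm_neg, ih]

private lemma cbinom_succ (w : ℂ) (k : ℕ) :
    cbinom w ((k : ℂ) + 1) = cbinom w k * ((w - k) / ((k : ℂ) + 1)) := by
  have hk1 : ((k : ℂ) + 1) ≠ 0 := Nat.cast_add_one_ne_zero k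
  have hGk : Complex.Gamma ((k : ℂ) + 1) ≠ 0 := by
    apply Complex.Gamma_ne_zero_of_re_pos
    simp only [Complex.add_re, Complex.natCast_re, Complex.one_re]
    positivity
  unfold cbinom
  have h2 : w - ((k : ℂ) + 1) + 1 = w - k := by ring
  rw [h2, Complex.Gamma_add_one ((k : ℂ) + 1) hk1]
  by_cases hwk : w - (k : ℂ) = 0
  · rw [hwk, Complex.Gamma_zero]
    simp
  · rw [Complex.Gamma_add_one (w - k) hwk]
    by_cases hG0 : Complex.Gamma (w - (k : ℂ)) = 0
    · simp [hG0]
    · field_simp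

private lemma step_ineq {x δ b : ℝ} (hx : 1 ≤ x) (hδ0 : 0 < δ) (hδ1 : δ ≤ 1/2)
    (hbx : b ≤ x - δ) : (b / x) * (x + 1) ^ δ ≤ x ^ δ := by
  have hx0 : (0:ℝ) < x := lt_of_lt_of_le one_pos hx
  have h1 : (x + 1 : ℝ) ^ δ ≤ x ^ δ * (1 + δ / x) := by
    have e : x + 1 = x * (1 + 1 / x) := by field_simp
    rw [e, Real.mul_rpow hx0.le (by positivity)]
    have hber : (1 + 1/x) ^ δ ≤ 1 + δ * (1/x) := by
      have h1x : (0:ℝ) ≤ 1/x := by positivity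
      exact rpow_one_add_le_one_add_mul_self (by linarith) hδ0.le (by linarith)
    calc x ^ δ * (1 + 1/x) ^ δ ≤ x ^ δ * (1 + δ * (1/x)) := by
          exact mul_le_mul_of_nonneg_left hber (Real.rpow_nonneg hx0.le δ)
      _ = x ^ δ * (1 + δ / x) := by ring
  have h2 : (b / x) * (x + 1) ^ δ ≤ ((x - δ)/x) * (x ^ δ * (1 + δ / x)) := by
    apply mul_le_mul (by gcongr) h1 (Real.rpow_nonneg (by linarith) δ)
      (div_nonneg (by linarith) hx0.le)
  have h3 : ((x - δ)/x) * (1 + δ / x) ≤ 1 := by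
    have e : ((x - δ)/x) * (1 + δ / x) = 1 - (δ/x)^2 := by field_simp; ring
    nlinarith [sq_nonneg (δ/x)]
  calc (b / x) * (x + 1) ^ δ ≤ ((x - δ)/x) * (x ^ δ * (1 + δ / x)) := h2
    _ = x ^ δ * (((x - δ)/x) * (1 + δ / x)) := by ring
    _ ≤ x ^ δ * 1 := mul_le_mul_of_nonneg_left h3 (Real.rpow_nonneg hx0.le δ)
    _ = x ^ δ := mul_one _

theorem binom_sinc_series_abs_convergent (w : ℂ) (hw : -1 < w.re) (z : ℂ) :
    Summable (fun k : ℕ => ‖cbinom w (k : ℂ) * csinc (z - k)‖) := by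
  set δ : ℝ := min (w.re + 1) 1 / 2 with hδdef
  have hδ0 : 0 < δ := by
    have : (0:ℝ) < min (w.re + 1) 1 := lt_min (by linarith) one_pos
    positivity
  have hδ1 : δ ≤ 1/2 := by
    have : min (w.re + 1) 1 ≤ 1 := min_le_right _ _
    rw [hδdef]; linarith
  have hδr : δ ≤ (w.re + 1)/2 := by
    have : min (w.re + 1) 1 ≤ w.re + 1 := min_le_left _ _
    rw [hδdef]; linarith
  -- the weighted sequence
  set s : ℕ → ℝ := fun k => ‖cbinom w (k : ℂ)‖ * ((k:ℝ) + 1) ^ δ with hsdef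
  have hs_nonneg : ∀ k, 0 ≤ s k := fun k =>
    mul_nonneg (norm_nonneg _) (Real.rpow_nonneg (by positivity) δ)
  -- eventually the norm of w - k is small enough
  set c : ℝ := 1 - δ + w.re with hc
  have hc0 : 0 < c := by rw [hc]; linarith
  obtain ⟨N, hN⟩ := exists_nat_ge (w.im ^ 2 / c + |w.re| + 1)
  have hwk_bound : ∀ k : ℕ, N ≤ k → ‖w - (k:ℂ)‖ ≤ (k:ℝ) + 1 - δ := by
    intro k hk
    have hkr : w.im ^ 2 / c + |w.re| + 1 ≤ (k:ℝ) := le_trans hN (by exact_mod_cast hk)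
    have hsq : ‖w - (k:ℂ)‖ ^ 2 = (w.re - k) ^ 2 + w.im ^ 2 := by
      rw [Complex.sq_norm, Complex.normSq_apply]
      simp [Complex.sub_re, Complex.sub_im, Complex.natCast_re, Complex.natCast_im]
      ring
    have hcim : c * (w.im ^ 2 / c) = w.im ^ 2 := mul_div_cancel₀ _ hc0.ne'
    have hkd : (0:ℝ) ≤ (k:ℝ) + 1 - δ := by
      have : (0:ℝ) ≤ (k:ℝ) := Nat.cast_nonneg k
      linarith
    have hle : ‖w - (k:ℂ)‖ ^ 2 ≤ ((k:ℝ) + 1 - δ) ^ 2 := by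
      rw [hsq]
      nlinarith [mul_le_mul_of_nonneg_left hkr hc0.le, le_abs_self w.re, neg_abs_le w.re,
        abs_nonneg w.re, mul_le_mul_of_nonneg_left (neg_abs_le w.re) hc0.le]
    calc ‖w - (k:ℂ)‖ = Real.sqrt (‖w - (k:ℂ)‖ ^ 2) := (Real.sqrt_sq (norm_nonneg _)).symm
      _ ≤ Real.sqrt (((k:ℝ) + 1 - δ) ^ 2) := Real.sqrt_le_sqrt hle
      _ = (k:ℝ) + 1 - δ := Real.sqrt_sq hkd
  -- the weighted sequence is eventually antitone
  have hstep : ∀ k : ℕ, N ≤ k → s (k + 1) ≤ s k := by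
    intro k hk
    have hx1 : (1:ℝ) ≤ (k:ℝ) + 1 := by
      have : (0:ℝ) ≤ (k:ℝ) := Nat.cast_nonneg k
      linarith
    have hx0 : (0:ℝ) < (k:ℝ) + 1 := by linarith
    have ha : ‖cbinom w ((k+1 : ℕ) : ℂ)‖ = ‖cbinom w (k:ℂ)‖ * (‖w - (k:ℂ)‖ / ((k:ℝ) + 1)) := by
      have : ((k+1 : ℕ) : ℂ) = (k:ℂ) + 1 := by push_cast; ring
      rw [this, cbinom_succ, norm_mul, norm_div]
      congr 2
      rw [show ((k:ℂ) + 1) = (((k:ℝ) + 1 : ℝ) : ℂ) by push_cast; ring, Complex.norm_real,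
        Real.norm_of_nonneg hx0.le]
    have hkey : (‖w - (k:ℂ)‖ / ((k:ℝ) + 1)) * (((k:ℝ) + 1) + 1) ^ δ ≤ ((k:ℝ) + 1) ^ δ :=
      step_ineq hx1 hδ0 hδ1 (by have := hwk_bound k hk; linarith)
    have hcast : ((k+1 : ℕ) : ℝ) + 1 = ((k:ℝ) + 1) + 1 := by push_cast; ring
    calc s (k + 1) = ‖cbinom w ((k+1 : ℕ) : ℂ)‖ * (((k:ℝ) + 1) + 1) ^ δ := by
          rw [hsdef]; simp only []; rw [hcast]
      _ = ‖cbinom w (k:ℂ)‖ * ((‖w - (k:ℂ)‖ / ((k:ℝ) + 1)) * (((k:ℝ) + 1) + 1) ^ δ) := by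
          rw [ha]; ring
      _ ≤ ‖cbinom w (k:ℂ)‖ * ((k:ℝ) + 1) ^ δ :=
          mul_le_mul_of_nonneg_left hkey (norm_nonneg _)
      _ = s k := rfl
  have hmono : ∀ k : ℕ, N ≤ k → s k ≤ s N := by
    intro k hk
    obtain ⟨m, rfl⟩ := Nat.exists_eq_add_of_le hk
    induction m with
    | zero => simp
    | succ n ih =>
        calc s (N + (n + 1)) = s ((N + n) + 1) := by ring_nf
          _ ≤ s (N + n) := hstep _ (Nat.le_add_right _ _)
          _ ≤ s N := ih (Nat.le_add_right _ _)
  -- the sinc factor bound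
  set B : ℝ := ‖Complex.sin ((π:ℝ) * z)‖ with hB
  obtain ⟨K, hK⟩ := exists_nat_ge (2 * ‖z‖ + 1)
  have hsinc : ∀ k : ℕ, K ≤ k → ‖csinc (z - k)‖ ≤ B / ((k:ℝ) + 1) := by
    intro k hk
    have hk2 : 2 * ‖z‖ + 1 ≤ (k:ℝ) := le_trans hK (by exact_mod_cast hk)
    have habsz : 0 ≤ ‖z‖ := norm_nonneg z
    have hlow : ((k:ℝ) + 1)/2 ≤ ‖z - (k:ℂ)‖ := by
      have h1 : ‖(k:ℂ)‖ - ‖z‖ ≤ ‖(k:ℂ) - z‖ := norm_sub_norm_le _ _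
      rw [norm_sub_rev] at h1
      have h2 : ‖(k:ℂ)‖ = (k:ℝ) := by
        rw [Complex.norm_natCast]
      rw [h2] at h1
      have : ‖z‖ = ‖z‖ := rfl
      rw [this] at h1
      linarith
    have hne : z - (k:ℂ) ≠ 0 := by
      intro h
      have hz : z = (k:ℂ) := by linear_combination h
      have : ‖z‖ = (k:ℝ) := by rw [hz]; exact Complex.norm_natCast k
      rw [this] at hk2
      have : (0:ℝ) ≤ (k:ℝ) := Nat.cast_nonneg k
      linarith
    rw [csinc, if_neg hne, norm_div, norm_mul]
    have hπ : ‖((π:ℝ):ℂ)‖ = π := by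
      rw [Complex.norm_real, Real.norm_of_nonneg Real.pi_pos.le]
    have hsin : ‖Complex.sin (((π:ℝ):ℂ) * (z - k))‖ = B := by
      have e : ((π:ℝ):ℂ) * (z - k) = ((π:ℝ):ℂ) * z - k * ((π:ℝ):ℂ) := by ring
      rw [e, norm_sin_sub_nat_mul_pi]
    rw [hsin, hπ]
    have hden : (k:ℝ) + 1 ≤ π * ‖z - (k:ℂ)‖ := by
      nlinarith [Real.pi_gt_three, hlow, norm_nonneg (z - (k:ℂ))]
    have hx0 : (0:ℝ) < (k:ℝ) + 1 := by
      have : (0:ℝ) ≤ (k:ℝ) := Nat.cast_nonneg k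
      linarith
    exact div_le_div_of_nonneg_left (norm_nonneg _) hx0 hden |>.trans_eq rfl
  -- conclude by comparison with a p-series
  apply summable_of_isBigO_nat (g := fun k : ℕ => (k:ℝ) ^ (-(1 + δ)))
    (Real.summable_nat_rpow.mpr (by linarith))
  rw [Asymptotics.isBigO_iff]
  refine ⟨s N * B, ?_⟩
  filter_upwards [Filter.eventually_ge_atTop (max N K + 1)] with k hk
  have hkN : N ≤ k := le_trans (le_trans (le_max_left N K) (Nat.le_succ _)) hk
  have hkK : K ≤ k := le_trans (le_trans (le_max_right N K) (Nat.le_succ _)) hk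
  have hk1 : 1 ≤ k := le_trans (Nat.le_add_left 1 (max N K)) hk
  have hx0 : (0:ℝ) < (k:ℝ) := by exact_mod_cast hk1
  have hx1 : (0:ℝ) < (k:ℝ) + 1 := by linarith
  have hrp : (0:ℝ) < ((k:ℝ) + 1) ^ δ := Real.rpow_pos_of_pos hx1 δ
  have hbinom : ‖cbinom w (k:ℂ)‖ ≤ s N / ((k:ℝ) + 1) ^ δ := by
    rw [le_div_iff₀ hrp]
    exact hmono k hkN
  have hterm : ‖cbinom w (k:ℂ) * csinc (z - k)‖ ≤ s N * B * ((k:ℝ)) ^ (-(1 + δ)) := by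
    rw [norm_mul]
    have h1 : ‖cbinom w (k:ℂ)‖ * ‖csinc (z - k)‖ ≤ (s N / ((k:ℝ) + 1) ^ δ) * (B / ((k:ℝ) + 1)) :=
      mul_le_mul hbinom (hsinc k hkK) (norm_nonneg _) (by positivity)
    have h2 : (s N / ((k:ℝ) + 1) ^ δ) * (B / ((k:ℝ) + 1)) =
        s N * B / (((k:ℝ) + 1) ^ δ * ((k:ℝ) + 1)) := div_mul_div_comm _ _ _ _
    have hden : (k:ℝ) ^ (1 + δ) ≤ ((k:ℝ) + 1) ^ δ * ((k:ℝ) + 1) := by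
      rw [Real.rpow_add hx0, Real.rpow_one]
      have hA : (k:ℝ) ^ δ ≤ ((k:ℝ) + 1) ^ δ := Real.rpow_le_rpow hx0.le (by linarith) hδ0.le
      nlinarith [Real.rpow_nonneg hx0.le δ]
    have h3 : s N * B / (((k:ℝ) + 1) ^ δ * ((k:ℝ) + 1)) ≤ s N * B / ((k:ℝ) ^ (1 + δ)) :=
      div_le_div_of_nonneg_left (mul_nonneg (hs_nonneg N) (norm_nonneg _))
        (Real.rpow_pos_of_pos hx0 _) hden
    have h4 : s N * B / ((k:ℝ) ^ (1 + δ)) = s N * B * ((k:ℝ)) ^ (-(1 + δ)) := by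
      rw [Real.rpow_neg hx0.le, div_eq_mul_inv]
    linarith [h1, h2.le, h3, h4.le]
  calc ‖‖cbinom w (k:ℂ) * csinc (z - k)‖‖ = ‖cbinom w (k:ℂ) * csinc (z - k)‖ :=
        Real.norm_of_nonneg (norm_nonneg _)
    _ ≤ s N * B * ((k:ℝ)) ^ (-(1 + δ)) := hterm
    _ = s N * B * ‖(k:ℝ) ^ (-(1 + δ))‖ := by
        rw [Real.norm_of_nonneg (Real.rpow_nonneg hx0.le _)]
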